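/- Let R(L) denote the number of RSF layouts on L qubits. Then R(0) = R(1) = 1, and for every integer L ≥ 1, R(L+1) = R(L) + L·R(L−1). -/

import Mathlib

/-- An RSF (right standard form) layout on `L` qubits: a finite sequence
`((k_1,l_1),…,(k_n,l_n))` (possibly empty) of pairs of positive integers with
`k_i + 2 ≤ k_{i+1}` for consecutive entries and `1 ≤ l_i ≤ L - k_i` for each entry. -/
def IsRSF (L : ℕ) (s : List (ℕ × ℕ)) : Prop :=
  (∀ p ∈ s, 1 ≤ p.1 ∧ 1 ≤ p.2 ∧ p.2 ≤ L - p.1) ∧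
    s.Chain' fun p q => p.1 + 2 ≤ q.1

/-- The number of RSF layouts on `L` qubits. -/
noncomputable def numRSF (L : ℕ) : ℕ :=
  Nat.card {s : List (ℕ × ℕ) // IsRSF L s}

namespace RSFAux

instance : IsTrans (ℕ × ℕ) (fun p q => p.1 + 2 ≤ q.1) :=
  ⟨fun _ _ _ h1 h2 => by omega⟩

def inc (d : ℕ) (s : List (ℕ × ℕ)) : List (ℕ × ℕ) := s.map fun p => (p.1 + d, p.2)
def dec (d : ℕ) (s : List (ℕ × ℕ)) : List (ℕ × ℕ) := s.map fun p => (p.1 - d, p.2)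

lemma dec_inc (d : ℕ) (s : List (ℕ × ℕ)) : dec d (inc d s) = s := by
  induction s with
  | nil => rfl
  | cons p t ih =>
    simp only [inc, dec, List.map_cons] at *
    rw [ih]
    simp

lemma inc_dec (d : ℕ) (s : List (ℕ × ℕ)) (h : ∀ p ∈ s, d ≤ p.1) :
    inc d (dec d s) = s := by
  induction s with
  | nil => rfl
  | cons p t ih =>
    have h1 : d ≤ p.1 := h p (by simp)
    simp only [inc, dec, List.map_cons] at *
    rw [ih (fun q hq => h q (by simp [hq]))]
    have : p.1 - d + d = p.1 := by omega
    rw [this]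

lemma isRSF_nil (L : ℕ) : IsRSF L [] :=
  ⟨fun p hp => absurd hp List.not_mem_nil, List.isChain_nil⟩

lemma isRSF_inc (L d : ℕ) (s : List (ℕ × ℕ)) (h : IsRSF L s) :
    IsRSF (L + d) (inc d s) := by
  obtain ⟨h1, h2⟩ := h
  constructor
  · intro p hp
    simp only [inc, List.mem_map] at hp
    obtain ⟨q, hq, rfl⟩ := hp
    have := h1 q hq
    exact ⟨by omega, by omega, by simp; omega⟩
  · rw [inc, List.Chain', List.isChain_map]
    exact List.IsChain.imp (fun _ _ h => by omega) h2

lemma isRSF_dec (L d : ℕ) (s : List (ℕ × ℕ)) (h : IsRSF (L + d) s)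
    (hk : ∀ p ∈ s, d + 1 ≤ p.1) : IsRSF L (dec d s) := by
  obtain ⟨h1, h2⟩ := h
  constructor
  · intro p hp
    simp only [dec, List.mem_map] at hp
    obtain ⟨q, hq, rfl⟩ := hp
    have := h1 q hq
    have := hk q hq
    exact ⟨by simp; omega, by omega, by simp; omega⟩
  · rw [dec, List.Chain', List.isChain_map]
    have hp : s.Pairwise (fun a b => a.1 + 2 ≤ b.1) := List.isChain_iff_pairwise.mp h2
    exact (List.Pairwise.imp_of_mem (fun ha hb hab => by
      have := hk _ ha; omega) hp).isChain

lemma isRSF_tail {L k l : ℕ} {t : List (ℕ × ℕ)} (h : IsRSF L ((k, l) :: t)) :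
    IsRSF L t ∧ ∀ p ∈ t, k + 2 ≤ p.1 := by
  obtain ⟨h1, h2⟩ := h
  have hp := List.isChain_iff_pairwise.mp h2
  rw [List.pairwise_cons] at hp
  exact ⟨⟨fun p hp' => h1 p (List.mem_cons_of_mem _ hp'), hp.2.isChain⟩,
    fun p hpt => hp.1 p hpt⟩

lemma isRSF_cons_inc (M j : ℕ) (t : List (ℕ × ℕ)) (hj : j + 1 ≤ M + 1)
    (ht : IsRSF M t) : IsRSF (M + 2) ((1, j + 1) :: inc 2 t) := by
  obtain ⟨h1, hc⟩ := isRSF_inc M 2 t ht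
  constructor
  · rintro p hp
    rcases List.mem_cons.mp hp with rfl | hp'
    · exact ⟨by omega, by omega, by simp; omega⟩
    · exact h1 p hp'
  · rw [List.Chain', List.isChain_cons]
    refine ⟨?_, hc⟩
    intro q hq
    have hmem : q ∈ inc 2 t := List.mem_of_mem_head? hq
    simp only [inc, List.mem_map] at hmem
    obtain ⟨r, hr, rfl⟩ := hmem
    have := ht.1 r hr
    simp
    omega

def G (M : ℕ) :
    {s : List (ℕ × ℕ) // IsRSF (M + 1) s} ⊕
      (Fin (M + 1) × {s : List (ℕ × ℕ) // IsRSF M s}) →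
    {s : List (ℕ × ℕ) // IsRSF (M + 2) s}
  | Sum.inl ⟨u, hu⟩ => ⟨inc 1 u, isRSF_inc (M + 1) 1 u hu⟩
  | Sum.inr (j, ⟨t, ht⟩) =>
      ⟨(1, j.1 + 1) :: inc 2 t, isRSF_cons_inc M j.1 t (by omega) ht⟩

lemma G_inj (M : ℕ) : Function.Injective (G M) := by
  rintro (⟨u, hu⟩ | ⟨⟨j, hj⟩, ⟨t, ht⟩⟩) (⟨v, hv⟩ | ⟨⟨j', hj'⟩, ⟨t', ht'⟩⟩) h <;>
    simp only [G, Subtype.mk.injEq] at h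
  · have huv : u = v := by
      have := congrArg (dec 1) h
      rwa [dec_inc, dec_inc] at this
    subst huv; rfl
  · exfalso
    cases u with
    | nil => simp [inc] at h
    | cons p u' =>
      have h1 := hu.1 p (by simp)
      simp only [inc, List.map_cons, List.cons.injEq, Prod.mk.injEq] at h
      omega
  · exfalso
    cases v with
    | nil => simp [inc] at h
    | cons p v' =>
      have h1 := hv.1 p (by simp)
      simp only [inc, List.map_cons, List.cons.injEq, Prod.mk.injEq] at h
      omega
  · simp only [List.cons.injEq, Prod.mk.injEq] at h
    have htt : t = t' := by
      have := congrArg (dec 2) h.2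
      rwa [dec_inc, dec_inc] at this
    have hjj : j = j' := by omega
    subst htt; subst hjj; rfl

lemma G_surj (M : ℕ) : Function.Surjective (G M) := by
  rintro ⟨s, hs⟩
  cases s with
  | nil => exact ⟨Sum.inl ⟨[], isRSF_nil _⟩, rfl⟩
  | cons p t =>
    obtain ⟨k, l⟩ := p
    obtain ⟨htR, hmem⟩ := isRSF_tail hs
    have hkl := hs.1 (k, l) (by simp)
    simp only at hkl
    by_cases hk : k = 1
    · subst hk
      have hlt : l - 1 < M + 1 := by omega
      have htdec : IsRSF M (dec 2 t) :=
        isRSF_dec M 2 t htR (fun p hp => by have := hmem p hp; omega)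
      refine ⟨Sum.inr (⟨l - 1, hlt⟩, ⟨dec 2 t, htdec⟩), Subtype.ext ?_⟩
      simp only [G]
      rw [inc_dec 2 t (fun p hp => by have := hmem p hp; omega)]
      have : l - 1 + 1 = l := by omega
      rw [this]
    · have hall : ∀ p ∈ (k, l) :: t, 2 ≤ p.1 := by
        rintro p hp
        rcases List.mem_cons.mp hp with rfl | hp'
        · simp; omega
        · have := hmem p hp'; omega
      have hdec : IsRSF (M + 1) (dec 1 ((k, l) :: t)) :=
        isRSF_dec (M + 1) 1 _ hs (fun p hp => hall p hp)
      refine ⟨Sum.inl ⟨dec 1 ((k, l) :: t), hdec⟩, Subtype.ext ?_⟩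
      simp only [G]
      exact inc_dec 1 _ (fun p hp => by have := hall p hp; omega)

noncomputable def rsfEquiv (M : ℕ) :
    ({s : List (ℕ × ℕ) // IsRSF (M + 1) s} ⊕
      (Fin (M + 1) × {s : List (ℕ × ℕ) // IsRSF M s})) ≃
    {s : List (ℕ × ℕ) // IsRSF (M + 2) s} :=
  Equiv.ofBijective (G M) ⟨G_inj M, G_surj M⟩

lemma eq_nil_of_le_one {L : ℕ} (hL : L ≤ 1) {s : List (ℕ × ℕ)}
    (h : IsRSF L s) : s = [] := by
  cases s with
  | nil => rfl
  | cons p t =>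
    exfalso
    have := h.1 p List.mem_cons_self
    omega

lemma subsingleton_of_le_one {L : ℕ} (hL : L ≤ 1) :
    Subsingleton {s : List (ℕ × ℕ) // IsRSF L s} :=
  ⟨fun a b => Subtype.ext (by rw [eq_nil_of_le_one hL a.2, eq_nil_of_le_one hL b.2])⟩

lemma rsf_finite : ∀ L : ℕ, Finite {s : List (ℕ × ℕ) // IsRSF L s} := by
  intro L
  induction L using Nat.strong_induction_on with
  | _ L ih =>
    match L with
    | 0 => exact @Finite.of_subsingleton _ (subsingleton_of_le_one (by omega))
    | 1 => exact @Finite.of_subsingleton _ (subsingleton_of_le_one (by omega))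
    | (M + 2) =>
      haveI := ih (M + 1) (by omega)
      haveI := ih M (by omega)
      exact Finite.of_equiv _ (rsfEquiv M)

lemma card_one {L : ℕ} (hL : L ≤ 1) : numRSF L = 1 := by
  rw [numRSF, Nat.card_eq_one_iff_unique]
  exact ⟨subsingleton_of_le_one hL, ⟨⟨[], isRSF_nil _⟩⟩⟩

lemma key (M : ℕ) : numRSF (M + 2) = numRSF (M + 1) + (M + 1) * numRSF M := by
  haveI := rsf_finite (M + 1)
  haveI := rsf_finite M
  rw [numRSF, numRSF, numRSF, ← Nat.card_congr (rsfEquiv M), Nat.card_sum,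
    Nat.card_prod]
  simp [Nat.card_eq_fintype_card]

end RSFAux

/-- The number `R L` of RSF layouts on `L` qubits satisfies `R 0 = R 1 = 1` and
the recurrence `R (L+1) = R L + L * R (L-1)` for every `L ≥ 1`. -/
theorem numRSF_recurrence :
    numRSF 0 = 1 ∧ numRSF 1 = 1 ∧
      ∀ L : ℕ, 1 ≤ L → numRSF (L + 1) = numRSF L + L * numRSF (L - 1) := by
  refine ⟨RSFAux.card_one (by omega), RSFAux.card_one (by omega), ?_⟩
  intro L hL
  obtain ⟨M, rfl⟩ : ∃ M, L = M + 1 := ⟨L - 1, by omega⟩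
  exact RSFAux.key M
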